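/- arXiv:1303.4669 — 2 statements merged into one kernel-verified Lean document; each statement's English description precedes it below -/
import Mathlib

section
/- A simplicial set X is isomorphic to the nerve of some category if and only if for every n the canonical spine map X_n → X_1 ×_{X_0} X_1 ×_{X_0} ⋯ ×_{X_0} X_1 (sending an n-simplex to the path of its n consecutive edges between vertices 0,1,…,n) is a bijection. -/
open CategoryTheory Simplicial SSet SimplexCategory SSet.StrictSegal
universe u
namespace NerveSpineAux

lemma hom1_ext {n : SimplexCategory} {f g : (⦋1⦌:SimplexCategory) ⟶ n}
    (h0 : f.toOrderHom 0 = g.toOrderHom 0) (h1 : f.toOrderHom 1 = g.toOrderHom 1) : f = g := by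
  ext i
  match i with
  | 0 => exact congrArg Fin.val h0
  | 1 => exact congrArg Fin.val h1

lemma δ_one_comp_mkOfLe {n} (i j : Fin (n+1)) (h : i ≤ j) :
    (δ 1 : (⦋0⦌:SimplexCategory) ⟶ ⦋1⦌) ≫ mkOfLe i j h = SimplexCategory.const ⦋0⦌ ⦋n⦌ i := by
  apply Hom.ext_zero_left
  show (mkOfLe i j h).toOrderHom ((δ (1 : Fin 2)).toOrderHom 0) = i
  have : (δ (1 : Fin 2)).toOrderHom 0 = 0 := rfl
  rw [this]; rfl

lemma δ_zero_comp_mkOfLe {n} (i j : Fin (n+1)) (h : i ≤ j) :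
    (δ 0 : (⦋0⦌:SimplexCategory) ⟶ ⦋1⦌) ≫ mkOfLe i j h = SimplexCategory.const ⦋0⦌ ⦋n⦌ j := by
  apply Hom.ext_zero_left
  show (mkOfLe i j h).toOrderHom ((δ (0 : Fin 2)).toOrderHom 0) = j
  have : (δ (0 : Fin 2)).toOrderHom 0 = 1 := rfl
  rw [this]; rfl

lemma mkOfSucc_eq_mkOfLe {n} (i : Fin n) :
    mkOfSucc i = mkOfLe i.castSucc i.succ (Fin.castSucc_le_succ i) := by
  apply hom1_ext <;> rfl

lemma mkOfLe_self {n} (i : Fin (n+1)) :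
    mkOfLe i i le_rfl = SimplexCategory.const ⦋1⦌ ⦋n⦌ i := by apply hom1_ext <;> rfl

lemma mkOfLe_comp {n m : ℕ} (i j : Fin (n+1)) (h : i ≤ j) (g : (⦋n⦌:SimplexCategory) ⟶ ⦋m⦌) :
    mkOfLe i j h ≫ g = mkOfLe (g.toOrderHom i) (g.toOrderHom j) (g.toOrderHom.monotone h) := by
  apply hom1_ext <;> rfl

variable {X : SSet.{u}}

/-- source of an edge -/
lemma δ_one_map_mkOfLe {n} (x : X _⦋n⦌) (i j : Fin (n+1)) (h : i ≤ j) :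
    X.δ 1 (X.map (mkOfLe i j h).op x) = X.map (SimplexCategory.const ⦋0⦌ ⦋n⦌ i).op x := by
  dsimp [SimplicialObject.δ]
  rw [← FunctorToTypes.map_comp_apply, ← op_comp, δ_one_comp_mkOfLe]

lemma δ_zero_map_mkOfLe {n} (x : X _⦋n⦌) (i j : Fin (n+1)) (h : i ≤ j) :
    X.δ 0 (X.map (mkOfLe i j h).op x) = X.map (SimplexCategory.const ⦋0⦌ ⦋n⦌ j).op x := by
  dsimp [SimplicialObject.δ]
  rw [← FunctorToTypes.map_comp_apply, ← op_comp, δ_zero_comp_mkOfLe]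

/-- The objects of the homotopy category of a strict Segal simplicial set. -/
def HoObj (X : SSet.{u}) : Type u := X _⦋0⦌

/-- Edges as morphisms. -/
def Edge (x y : HoObj X) : Type u := {e : X.obj (Opposite.op (SimplexCategory.mk 1)) // X.δ 1 e = x ∧ X.δ 0 e = y}

def idE (x : HoObj X) : Edge x x :=
  ⟨X.σ 0 x,
    types_congr_hom (X.δ_comp_σ_succ' (i := 0) (by rfl)) x,
    types_congr_hom (X.δ_comp_σ_self' (i := 0) (by rfl)) x⟩

/-- The 2-path determined by two composable edges. -/
def path₂ {x y z : HoObj X} (f : Edge x y) (g : Edge y z) : Path X 2 where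
  vertex i := match i with
    | 0 => x
    | 1 => y
    | 2 => z
  arrow i := match i with
    | 0 => f.1
    | 1 => g.1
  arrow_src i := by fin_cases i
                    · exact f.2.1
                    · exact g.2.1
  arrow_tgt i := by fin_cases i
                    · exact f.2.2
                    · exact g.2.2

variable [X.IsStrictSegal]

/-- the chosen strict Segal structure -/
noncomputable abbrev sS (X : SSet.{u}) [X.IsStrictSegal] : X.StrictSegal :=
  StrictSegal.ofIsStrictSegal X

noncomputable def compE {x y z : HoObj X} (f : Edge x y) (g : Edge y z) : Edge x z := by
  refine ⟨(sS X).spineToDiagonal (path₂ f g), ?_, ?_⟩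
  · unfold spineToDiagonal SimplicialObject.diagonal
    rw [show diag 2 = mkOfLe 0 2 (by decide) from rfl, δ_one_map_mkOfLe,
      spineToSimplex_vertex]
    rfl
  · unfold spineToDiagonal SimplicialObject.diagonal
    rw [show diag 2 = mkOfLe 0 2 (by decide) from rfl, δ_zero_map_mkOfLe,
      spineToSimplex_vertex]
    rfl

end NerveSpineAux

namespace NerveSpineAux
variable {X : SSet.{u}} [X.IsStrictSegal]

lemma spineToSimplex_idcomp {x y : HoObj X} (f : Edge x y) :
    (sS X).spineToSimplex (path₂ (idE x) f) = X.σ 0 f.1 := by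
  apply (sS X).spineInjective
  show X.spine 2 _ = X.spine 2 _
  rw [spine_spineToSimplex_apply]
  symm
  apply Path.ext'
  intro i
  have harr : ∀ i : Fin 2, (X.spine 2 (X.σ 0 f.1)).arrow i
      = X.map (mkOfSucc i ≫ SimplexCategory.σ 0).op f.1 := by
    intro i
    rw [spine_arrow]
    dsimp [SimplicialObject.σ]
    rw [← FunctorToTypes.map_comp_apply, ← op_comp]
  fin_cases i
  · show (X.spine 2 (X.σ 0 f.1)).arrow 0 = (path₂ (idE x) f).arrow 0
    rw [harr]
    have : mkOfSucc (0 : Fin 2) ≫ SimplexCategory.σ 0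
        = SimplexCategory.σ 0 ≫ SimplexCategory.δ 1 := by apply hom1_ext <;> decide
    rw [this, op_comp, FunctorToTypes.map_comp_apply]
    show X.σ 0 (X.δ 1 f.1) = _
    rw [f.2.1]
    rfl
  · show (X.spine 2 (X.σ 0 f.1)).arrow 1 = (path₂ (idE x) f).arrow 1
    rw [harr]
    have : mkOfSucc (1 : Fin 2) ≫ SimplexCategory.σ 0 = 𝟙 (SimplexCategory.mk 1) := by
      apply hom1_ext <;> decide
    rw [this, op_id, FunctorToTypes.map_id_apply]
    rfl

lemma spineToSimplex_compid {x y : HoObj X} (f : Edge x y) :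
    (sS X).spineToSimplex (path₂ f (idE y)) = X.σ 1 f.1 := by
  apply (sS X).spineInjective
  show X.spine 2 _ = X.spine 2 _
  rw [spine_spineToSimplex_apply]
  symm
  apply Path.ext'
  intro i
  have harr : ∀ i : Fin 2, (X.spine 2 (X.σ 1 f.1)).arrow i
      = X.map (mkOfSucc i ≫ SimplexCategory.σ 1).op f.1 := by
    intro i
    rw [spine_arrow]
    dsimp [SimplicialObject.σ]
    rw [← FunctorToTypes.map_comp_apply, ← op_comp]
  fin_cases i
  · show (X.spine 2 (X.σ 1 f.1)).arrow 0 = (path₂ f (idE y)).arrow 0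
    rw [harr]
    have : mkOfSucc (0 : Fin 2) ≫ SimplexCategory.σ 1 = 𝟙 (SimplexCategory.mk 1) := by
      apply hom1_ext <;> decide
    rw [this, op_id, FunctorToTypes.map_id_apply]
    rfl
  · show (X.spine 2 (X.σ 1 f.1)).arrow 1 = (path₂ f (idE y)).arrow 1
    rw [harr]
    have : mkOfSucc (1 : Fin 2) ≫ SimplexCategory.σ 1
        = SimplexCategory.σ 0 ≫ SimplexCategory.δ 0 := by apply hom1_ext <;> decide
    rw [this, op_comp, FunctorToTypes.map_comp_apply]
    show X.σ 0 (X.δ 0 f.1) = _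
    rw [f.2.2]
    rfl

lemma idE_compE {x y : HoObj X} (f : Edge x y) : compE (idE x) f = f := by
  apply Subtype.ext
  show (sS X).spineToDiagonal _ = f.1
  unfold spineToDiagonal
  rw [spineToSimplex_idcomp]
  dsimp [SimplicialObject.diagonal, SimplicialObject.σ]
  rw [← FunctorToTypes.map_comp_apply, ← op_comp]
  have : diag 2 ≫ SimplexCategory.σ 0 = 𝟙 (SimplexCategory.mk 1) := by
    apply hom1_ext <;> decide
  rw [this, op_id, FunctorToTypes.map_id_apply]

lemma compE_idE {x y : HoObj X} (f : Edge x y) : compE f (idE y) = f := by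
  apply Subtype.ext
  show (sS X).spineToDiagonal _ = f.1
  unfold spineToDiagonal
  rw [spineToSimplex_compid]
  dsimp [SimplicialObject.diagonal, SimplicialObject.σ]
  rw [← FunctorToTypes.map_comp_apply, ← op_comp]
  have : diag 2 ≫ SimplexCategory.σ 1 = 𝟙 (SimplexCategory.mk 1) := by
    apply hom1_ext <;> decide
  rw [this, op_id, FunctorToTypes.map_id_apply]

/-- The 3-path determined by three composable edges. -/
def path₃ {x y z w : HoObj X} (f : Edge x y) (g : Edge y z) (h : Edge z w) : Path X 3 where
  vertex i := match i with
    | 0 => x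
    | 1 => y
    | 2 => z
    | 3 => w
  arrow i := match i with
    | 0 => f.1
    | 1 => g.1
    | 2 => h.1
  arrow_src i := by fin_cases i
                    · exact f.2.1
                    · exact g.2.1
                    · exact h.2.1
  arrow_tgt i := by fin_cases i
                    · exact f.2.2
                    · exact g.2.2
                    · exact h.2.2

lemma path₃_interval₀ {x y z w : HoObj X} (f : Edge x y) (g : Edge y z) (h : Edge z w) :
    (path₃ f g h).interval 0 2 (by omega) = path₂ f g := by
  apply Path.ext'
  intro i
  fin_cases i <;> rfl

lemma path₃_interval₁ {x y z w : HoObj X} (f : Edge x y) (g : Edge y z) (h : Edge z w) :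
    (path₃ f g h).interval 1 2 (by omega) = path₂ g h := by
  apply Path.ext'
  intro i
  fin_cases i <;> rfl

lemma compE_assoc {x y z w : HoObj X} (f : Edge x y) (g : Edge y z) (h : Edge z w) :
    compE (compE f g) h = compE f (compE g h) := by
  apply Subtype.ext
  have h1 : path₂ (compE f g) h = X.spine 2 (X.δ 1 ((sS X).spineToSimplex (path₃ f g h))) := by
    symm
    apply Path.ext'
    intro i
    fin_cases i
    · show (X.spine 2 (X.δ 1 ((sS X).spineToSimplex (path₃ f g h)))).arrow 0
          = (path₂ (compE f g) h).arrow 0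
      rw [spine_δ_arrow_eq (sS X) (path₃ f g h) (i := 0) (j := 1) (by decide)]
      exact congrArg (sS X).spineToDiagonal (path₃_interval₀ f g h)
    · show (X.spine 2 (X.δ 1 ((sS X).spineToSimplex (path₃ f g h)))).arrow 1
          = (path₂ (compE f g) h).arrow 1
      rw [spine_δ_arrow_gt (sS X) (path₃ f g h) (i := 1) (j := 1) (by decide)]
      rfl
  have h2 : path₂ f (compE g h) = X.spine 2 (X.δ 2 ((sS X).spineToSimplex (path₃ f g h))) := by
    symm
    apply Path.ext'
    intro i
    fin_cases i
    · show (X.spine 2 (X.δ 2 ((sS X).spineToSimplex (path₃ f g h)))).arrow 0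
          = (path₂ f (compE g h)).arrow 0
      rw [spine_δ_arrow_lt (sS X) (path₃ f g h) (i := 0) (j := 2) (by decide)]
      rfl
    · show (X.spine 2 (X.δ 2 ((sS X).spineToSimplex (path₃ f g h)))).arrow 1
          = (path₂ f (compE g h)).arrow 1
      rw [spine_δ_arrow_eq (sS X) (path₃ f g h) (i := 1) (j := 2) (by decide)]
      exact congrArg (sS X).spineToDiagonal (path₃_interval₁ f g h)
  show (sS X).spineToDiagonal _ = (sS X).spineToDiagonal _
  rw [h1, h2]
  unfold spineToDiagonal
  rw [spineToSimplex_spine_apply, spineToSimplex_spine_apply]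
  dsimp [SimplicialObject.diagonal, SimplicialObject.δ]
  rw [← FunctorToTypes.map_comp_apply, ← op_comp,
    ← FunctorToTypes.map_comp_apply, ← op_comp]
  have e1 : diag 2 ≫ SimplexCategory.δ 1 = diag 3 := by apply hom1_ext <;> decide
  have e2 : diag 2 ≫ SimplexCategory.δ 2 = diag 3 := by apply hom1_ext <;> decide
  rw [e1, e2]

noncomputable instance : Category.{u} (HoObj X) where
  Hom := Edge
  id := idE
  comp := compE
  id_comp := idE_compE
  comp_id := compE_idE
  assoc := compE_assoc

end NerveSpineAux

namespace NerveSpineAux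
variable {X : SSet.{u}} [X.IsStrictSegal]

def vtx {n : ℕ} (σ : X _⦋n⦌) (i : Fin (n+1)) : HoObj X :=
  X.map (SimplexCategory.const ⦋0⦌ ⦋n⦌ i).op σ

def edHom {n : ℕ} (σ : X _⦋n⦌) {i j : Fin (n+1)} (h : i ≤ j) : Edge (vtx σ i) (vtx σ j) :=
  ⟨X.map (mkOfLe i j h).op σ, δ_one_map_mkOfLe σ i j h, δ_zero_map_mkOfLe σ i j h⟩

lemma edHom_self {n : ℕ} (σ : X _⦋n⦌) (i : Fin (n+1)) :
    (edHom σ (le_refl i)).1 = (idE (vtx σ i)).1 := by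
  show X.map (mkOfLe i i _).op σ = X.σ 0 (X.map (SimplexCategory.const ⦋0⦌ ⦋n⦌ i).op σ)
  dsimp [SimplicialObject.σ]
  have : mkOfLe i i (le_refl i)
      = (SimplexCategory.σ 0 : SimplexCategory.mk 1 ⟶ SimplexCategory.mk 0)
        ≫ SimplexCategory.const ⦋0⦌ ⦋n⦌ i := by
    apply hom1_ext <;> rfl
  rw [this, op_comp, FunctorToTypes.map_comp_apply]

lemma edHom_comp {n : ℕ} (σ : X _⦋n⦌) {i j k : Fin (n+1)} (h₁ : i ≤ j) (h₂ : j ≤ k) :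
    (edHom σ (h₁.trans h₂)).1 = (compE (edHom σ h₁) (edHom σ h₂)).1 := by
  have key : X.spine 2 (X.map (mkOfLeComp i j k h₁ h₂).op σ) = path₂ (edHom σ h₁) (edHom σ h₂) := by
    apply Path.ext'
    intro a
    fin_cases a
    · show (X.spine 2 (X.map (mkOfLeComp i j k h₁ h₂).op σ)).arrow 0 = _
      dsimp only [spine_arrow]
      rw [← FunctorToTypes.map_comp_apply, ← op_comp]
      have : mkOfSucc (0 : Fin 2) ≫ mkOfLeComp i j k h₁ h₂ = mkOfLe i j h₁ := by
        apply hom1_ext <;> rfl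
      rw [this]; rfl
    · show (X.spine 2 (X.map (mkOfLeComp i j k h₁ h₂).op σ)).arrow 1 = _
      dsimp only [spine_arrow]
      rw [← FunctorToTypes.map_comp_apply, ← op_comp]
      have : mkOfSucc (1 : Fin 2) ≫ mkOfLeComp i j k h₁ h₂ = mkOfLe j k h₂ := by
        apply hom1_ext <;> rfl
      rw [this]; rfl
  show X.map (mkOfLe i k _).op σ = (sS X).spineToDiagonal (path₂ (edHom σ h₁) (edHom σ h₂))
  rw [← key]
  unfold spineToDiagonal
  rw [spineToSimplex_spine_apply]
  dsimp [SimplicialObject.diagonal]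
  rw [← FunctorToTypes.map_comp_apply, ← op_comp]
  congr 2
  have : diag 2 ≫ mkOfLeComp i j k h₁ h₂ = mkOfLe i k (h₁.trans h₂) := by
    apply hom1_ext <;> rfl
  rw [this]

/-- eqToHom sandwich lemma for edges -/
lemma edge_eq_of_val {x y x' y' : HoObj X} (hx : x = x') (hy : y = y')
    (f : x ⟶ y) (g : x' ⟶ y') (h : f.1 = g.1) :
    f = eqToHom hx ≫ g ≫ eqToHom hy.symm := by
  subst hx; subst hy
  simp only [eqToHom_refl, Category.id_comp, Category.comp_id]
  exact Subtype.ext h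

lemma val_eqToHom_comp {x y x' y' : HoObj X} (hx : x = x') (hy : y' = y)
    (g : x' ⟶ y') : (eqToHom hx ≫ g ≫ eqToHom hy).1 = g.1 := by
  subst hx; subst hy
  simp

/-- The `n`-simplex of the nerve of `HoObj X` associated to an `n`-simplex of `X`. -/
def toFun {n : ℕ} (σ : X _⦋n⦌) : ComposableArrows (HoObj X) n where
  obj i := vtx σ i
  map {i j} φ := edHom σ (leOfHom φ)
  map_id i := Subtype.ext (edHom_self σ i)
  map_comp {i j k} φ ψ := Subtype.ext (edHom_comp σ (leOfHom φ) (leOfHom ψ))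

end NerveSpineAux

namespace NerveSpineAux
variable {X : SSet.{u}} [X.IsStrictSegal]

lemma vtx_natural {k l : ℕ} (f : (⦋k⦌:SimplexCategory) ⟶ ⦋l⦌) (σ : X _⦋l⦌)
    (i : Fin (k + 1)) :
    vtx (X.map f.op σ) i = vtx σ (f.toOrderHom i) := by
  unfold vtx
  rw [← FunctorToTypes.map_comp_apply, ← op_comp, SimplexCategory.const_comp]

lemma ed_natural {k l : ℕ} (f : (⦋k⦌:SimplexCategory) ⟶ ⦋l⦌) (σ : X _⦋l⦌)
    {i j : Fin (k + 1)} (hij : i ≤ j) :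
    (edHom (X.map f.op σ) hij).1 = (edHom σ (f.toOrderHom.monotone hij)).1 := by
  show X.map (mkOfLe i j hij).op (X.map f.op σ)
      = X.map (mkOfLe (f.toOrderHom i) (f.toOrderHom j) (f.toOrderHom.monotone hij)).op σ
  rw [← FunctorToTypes.map_comp_apply, ← op_comp, mkOfLe_comp]

/-- The natural map from `X` to the nerve of its homotopy category. -/
noncomputable def toNerve (X : SSet.{u}) [X.IsStrictSegal] : X ⟶ nerve (HoObj X) where
  app m := TypeCat.ofHom fun σ => toFun (n := m.unop.len) σ
  naturality m m' α := by
    ext σ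
    show toFun (n := m'.unop.len) (X.map α σ)
        = ((toFun (n := m.unop.len) σ).whiskerLeft (SimplexCategory.toCat.map α.unop).toFunctor)
    fapply CategoryTheory.Functor.ext
    · intro i
      exact vtx_natural (k := m'.unop.len) (l := m.unop.len) α.unop σ i
    · intro i j φ
      exact edge_eq_of_val
        (vtx_natural (k := m'.unop.len) (l := m.unop.len) α.unop σ i)
        (vtx_natural (k := m'.unop.len) (l := m.unop.len) α.unop σ j) _ _
        (ed_natural (k := m'.unop.len) (l := m.unop.len) α.unop σ (leOfHom φ))

lemma toFun_injective (n : ℕ) : Function.Injective (toFun (X := X) (n := n)) := by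
  intro σ σ' hEq
  apply (sS X).spineInjective
  show X.spine n σ = X.spine n σ'
  ext i
  · exact Functor.congr_obj hEq i
  · show X.map (mkOfSucc i).op σ = X.map (mkOfSucc i).op σ'
    rw [mkOfSucc_eq_mkOfLe]
    have h1 := Functor.congr_hom hEq (homOfLE (Fin.castSucc_le_succ i))
    have h2 := congrArg Subtype.val h1
    rw [val_eqToHom_comp] at h2
    exact h2

/-- The path in `X` underlying a composable string of arrows. -/
def pathOf {n : ℕ} (F : ComposableArrows (HoObj X) n) : Path X n where
  vertex i := F.obj i
  arrow i := (F.map (homOfLE (Fin.castSucc_le_succ i))).1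
  arrow_src i := (F.map (homOfLE (Fin.castSucc_le_succ i))).2.1
  arrow_tgt i := (F.map (homOfLE (Fin.castSucc_le_succ i))).2.2

lemma toFun_surjective (n : ℕ) : Function.Surjective (toFun (X := X) (n := n)) := by
  intro F
  refine ⟨(sS X).spineToSimplex (pathOf F), ?_⟩
  fapply ComposableArrows.ext
  · intro i
    show vtx ((sS X).spineToSimplex (pathOf F)) i = F.obj i
    exact (sS X).spineToSimplex_vertex i (pathOf F)
  · intro i hi
    refine edge_eq_of_val ((sS X).spineToSimplex_vertex _ _) ((sS X).spineToSimplex_vertex _ _) _ _ ?_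
    show X.map (mkOfLe ⟨i, by omega⟩ ⟨i+1, by omega⟩ (by simp [Fin.le_def])).op
        ((sS X).spineToSimplex (pathOf F)) = _
    have hle : mkOfLe (⟨i, by omega⟩ : Fin (n+1)) ⟨i+1, by omega⟩ (by simp [Fin.le_def])
        = mkOfSucc (⟨i, hi⟩ : Fin n) := by
      apply hom1_ext <;> rfl
    rw [hle, spineToSimplex_arrow]
    rfl

noncomputable def isoNerve (X : SSet.{u}) [X.IsStrictSegal] : X ≅ nerve (HoObj X) := by
  have : ∀ m : SimplexCategoryᵒᵖ, IsIso ((toNerve X).app m) := fun m =>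
    (isIso_iff_bijective _).2
      ⟨toFun_injective (X := X) m.unop.len, toFun_surjective (X := X) m.unop.len⟩
  have : IsIso (toNerve X) := NatIso.isIso_of_isIso_app _
  exact asIso (toNerve X)

end NerveSpineAux

namespace NerveSpineAux

lemma spine_naturality {X Y : SSet.{u}} (σ : X ⟶ Y) {n : ℕ} (x : X _⦋n⦌) :
    Y.spine n (σ.app (Opposite.op ⦋n⦌) x) = (X.spine n x).map σ := by
  ext i
  · exact (FunctorToTypes.naturality σ _ x).symm
  · exact (FunctorToTypes.naturality σ _ x).symm

def pathEquivOfIso {X Y : SSet.{u}} (e : X ≅ Y) (n : ℕ) : Path X n ≃ Path Y n where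
  toFun p := p.map e.hom
  invFun p := p.map e.inv
  left_inv p := by
    ext i
    · show e.inv.app (Opposite.op ⦋0⦌) (e.hom.app (Opposite.op ⦋0⦌) (p.vertex i)) = _
      rw [← FunctorToTypes.comp, e.hom_inv_id]
      rfl
    · show e.inv.app (Opposite.op ⦋1⦌) (e.hom.app (Opposite.op ⦋1⦌) (p.arrow i)) = _
      rw [← FunctorToTypes.comp, e.hom_inv_id]
      rfl
  right_inv p := by
    ext i
    · show e.hom.app (Opposite.op ⦋0⦌) (e.inv.app (Opposite.op ⦋0⦌) (p.vertex i)) = _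
      rw [← FunctorToTypes.comp, e.inv_hom_id]
      rfl
    · show e.hom.app (Opposite.op ⦋1⦌) (e.inv.app (Opposite.op ⦋1⦌) (p.arrow i)) = _
      rw [← FunctorToTypes.comp, e.inv_hom_id]
      rfl

end NerveSpineAux

open NerveSpineAux in
private theorem nerve_iff_spine_bijective_aux (X : SSet.{u}) :
    (∃ (C : Type u) (_ : Category.{u} C), Nonempty (X ≅ nerve C)) ↔
    ∀ n : ℕ, Function.Bijective (X.spine n) := by
  constructor
  · rintro ⟨C, _, ⟨e⟩⟩ n
    have hb : Function.Bijective ((nerve C).spine n) :=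
      ((Nerve.strictSegal C).spineEquiv n).bijective
    have happ : Function.Bijective (e.hom.app (Opposite.op (SimplexCategory.mk n))) :=
      (isIso_iff_bijective _).1 inferInstance
    have key : X.spine n = (pathEquivOfIso e n).symm ∘ (nerve C).spine n ∘
        (e.hom.app (Opposite.op (SimplexCategory.mk n))) := by
      funext x
      show _ = (pathEquivOfIso e n).symm ((nerve C).spine n (e.hom.app _ x))
      rw [spine_naturality e.hom x]
      exact ((pathEquivOfIso e n).symm_apply_apply _).symm
    rw [key]
    exact ((pathEquivOfIso e n).symm.bijective.comp hb).comp happ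
  · intro h
    haveI : X.IsStrictSegal := ⟨h⟩
    exact ⟨HoObj X, inferInstance, ⟨isoNerve X⟩⟩

/-- A simplicial set is isomorphic to the nerve of some category if and only if, for
every `n`, the spine map `X _⦋n⦌ → X _⦋1⦌ ×_{X _⦋0⦌} ⋯ ×_{X _⦋0⦌} X _⦋1⦌`, sending an
`n`-simplex to its path of `n` consecutive edges, is a bijection.  (Here `SSet.Path X n`
is exactly the set of strings of `n` composable edges of `X`, i.e. the iterated fiber
product.) -/
theorem nerve_iff_spine_bijective (X : SSet.{u}) :
    (∃ (C : Type u) (_ : Category.{u} C), Nonempty (X ≅ nerve C)) ↔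
    ∀ n : ℕ, Function.Bijective (X.spine n) := by
  exact nerve_iff_spine_bijective_aux X
end

section
/- Let C be a category and let A be the type of all morphisms of C (the sigma-type of all hom-sets over all pairs of objects). If C has products of every family of objects indexed by A (i.e., C has limits of shape the discrete category on A), then C is a preorder: for any two objects X and Y there is at most one morphism from X to Y. -/
open CategoryTheory CategoryTheory.Limits

/-- If a category `C` has products of every family indexed by the type of all morphisms
of `C` (the sigma-type of all hom-sets), then `C` is a preorder: any two parallel
morphisms are equal. -/
theorem preorder_of_hasProducts_indexed_by_morphisms
    {C : Type u} [Category.{v} C]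
    (h : HasLimitsOfShape (Discrete (Σ (X : C) (Y : C), X ⟶ Y)) C)
    {X Y : C} (f g : X ⟶ Y) : f = g := by
  classical
  by_contra f_ne_g
  let md := Σ (Z : C) (W : C), Z ⟶ W
  let α : Cardinal.{max u v} := Cardinal.mk md
  have two_le : (2 : Cardinal.{max u v}) ≤ Cardinal.lift.{max u v} (Cardinal.mk (X ⟶ Y)) := by
    have : (2 : Cardinal.{v}) ≤ Cardinal.mk (X ⟶ Y) :=
      Cardinal.two_le_iff.2 ⟨f, g, f_ne_g⟩
    have h2 : Cardinal.lift.{max u v} (2 : Cardinal.{v}) ≤ Cardinal.lift.{max u v} (Cardinal.mk (X ⟶ Y)) :=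
      Cardinal.lift_le.2 this
    simpa using h2
  let yp : C := ∏ᶜ fun _ : md => Y
  apply not_le_of_gt (Cardinal.cantor α)
  have e : (X ⟶ yp) ≃ (md → (X ⟶ Y)) :=
    { toFun := fun f k => f ≫ Pi.π _ k
      invFun := Pi.lift
      left_inv := fun f => by ext k; simp
      right_inv := fun f => by funext k; simp }
  have key : Cardinal.lift.{max u v} (Cardinal.mk (X ⟶ yp)) ≤ α := by
    have : Cardinal.lift.{max u v} (Cardinal.mk (X ⟶ yp)) ≤ Cardinal.lift.{v} (Cardinal.mk md) :=
      Cardinal.lift_mk_le'.2 ⟨⟨fun f => ⟨_, _, f⟩, by rintro f g k; cases k; rfl⟩⟩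
    rwa [Cardinal.lift_id'.{v, max u v}] at this
  calc (2 : Cardinal.{max u v}) ^ α
      ≤ Cardinal.lift.{max u v} (Cardinal.mk (X ⟶ Y)) ^ α :=
        Cardinal.power_le_power_right two_le
    _ = Cardinal.lift.{max u v} (Cardinal.mk (X ⟶ yp)) := by
        rw [Cardinal.lift_mk_eq'.2 ⟨e⟩]
        rw [Cardinal.mk_arrow]
        rw [Cardinal.lift_id'.{v, max u v}, Cardinal.lift_id'.{v, max u v}]
    _ ≤ α := key
end
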